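/- Let n ≥ 1, let λ ≥ 0 be a real number, let Γ be a symmetric n×n real matrix, and let Z and Σ̃ be positive semidefinite n×n real matrices. If the 2n×2n block matrix [[λI − Γ, λΣ̃^{1/2}], [λΣ̃^{1/2}, Z]] is positive semidefinite, then for every positive semidefinite n×n matrix Σ one has Tr(ΓΣ) + 2λ·Tr[(Σ^{1/2} Σ̃ Σ^{1/2})^{1/2}] ≤ λ·Tr(Σ) + Tr(Z). -/

import Mathlib

open Matrix
open scoped Classical

/-- The positive semidefinite square root of a matrix (junk value `0` if the matrix is
not positive semidefinite). -/

noncomputable def psdSqrt {n : ℕ} (A : Matrix (Fin n) (Fin n) ℝ) :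
    Matrix (Fin n) (Fin n) ℝ :=
  if h : A.PosSemidef then
    (h.1.eigenvectorUnitary : Matrix (Fin n) (Fin n) ℝ) *
      diagonal ((↑) ∘ Real.sqrt ∘ h.1.eigenvalues) *
      (star h.1.eigenvectorUnitary : Matrix (Fin n) (Fin n) ℝ)
  else 0

lemma aux_psdSqrt_spec {n : ℕ} {A : Matrix (Fin n) (Fin n) ℝ} (h : A.PosSemidef) :
    (psdSqrt A).PosSemidef ∧ psdSqrt A * psdSqrt A = A := by
  rw [psdSqrt, dif_pos h]
  set U : Matrix (Fin n) (Fin n) ℝ := (h.1.eigenvectorUnitary : Matrix (Fin n) (Fin n) ℝ)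
  have hU : star U * U = 1 := by
    exact_mod_cast (Matrix.mem_unitaryGroup_iff').mp h.1.eigenvectorUnitary.2
  set D : Matrix (Fin n) (Fin n) ℝ :=
    diagonal (fun i => Real.sqrt (h.1.eigenvalues i)) with hD
  have hD' : (diagonal ((↑) ∘ Real.sqrt ∘ h.1.eigenvalues) : Matrix (Fin n) (Fin n) ℝ) = D := rfl
  have hstar : (star h.1.eigenvectorUnitary : Matrix (Fin n) (Fin n) ℝ) = star U := rfl
  rw [hD', hstar]
  constructor
  · have hd : D.PosSemidef := PosSemidef.diagonal (fun i => Real.sqrt_nonneg _)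
    simpa [star_eq_conjTranspose] using hd.mul_mul_conjTranspose_same U
  · calc U * D * star U * (U * D * star U) = U * (D * (star U * U) * D) * star U := by
          simp only [mul_assoc]
      _ = A := by
          rw [hU, mul_one, hD, diagonal_mul_diagonal]
          conv_rhs => rw [h.1.spectral_theorem]
          rw [Unitary.conjStarAlgAut_apply]
          congr 2
          refine congrArg diagonal ?_
          funext i
          simp [Real.mul_self_sqrt (h.eigenvalues_nonneg i)]


section AuxLemmas

variable {m : Type*} [Fintype m] [DecidableEq m]

lemma aux_trace_nonneg {M : Matrix m m ℝ} (hM : M.PosSemidef) : 0 ≤ M.trace := by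
  rw [Matrix.trace]
  refine Finset.sum_nonneg fun i _ => ?_
  exact hM.diag_nonneg

lemma aux_trace_fromBlocks {l : Type*} [Fintype l]
    (A : Matrix m m ℝ) (B : Matrix m l ℝ) (C : Matrix l m ℝ) (D : Matrix l l ℝ) :
    (Matrix.fromBlocks A B C D).trace = A.trace + D.trace := by
  simp [Matrix.trace, Matrix.diag, Fintype.sum_sum_type, Matrix.fromBlocks]

lemma aux_exists_pinv {P : Matrix m m ℝ} (hP : P.IsHermitian) :
    ∃ B : Matrix m m ℝ, B.IsHermitian ∧ P * B = B * P ∧ P * B * P = P ∧ B * P * B = B := by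
  set U : Matrix m m ℝ := (hP.eigenvectorUnitary : Matrix m m ℝ) with hU_def
  have hU : star U * U = 1 := by
    exact_mod_cast (Matrix.mem_unitaryGroup_iff').mp hP.eigenvectorUnitary.2
  set μ := hP.eigenvalues with hμ_def
  have key : ∀ f g : m → ℝ, (U * Matrix.diagonal f * star U) * (U * Matrix.diagonal g * star U)
      = U * Matrix.diagonal (fun i => f i * g i) * star U := by
    intro f g
    have h1 : Matrix.diagonal f * ((star U * U) * Matrix.diagonal g)
        = Matrix.diagonal fun i => f i * g i := by
      rw [hU, one_mul, Matrix.diagonal_mul_diagonal]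
    calc (U * Matrix.diagonal f * star U) * (U * Matrix.diagonal g * star U)
        = U * (Matrix.diagonal f * ((star U * U) * Matrix.diagonal g)) * star U := by
          simp only [mul_assoc]
      _ = _ := by rw [h1]
    
  have hPs : P = U * Matrix.diagonal μ * star U := by
    have := hP.spectral_theorem
    rw [Unitary.conjStarAlgAut_apply] at this
    rwa [show (RCLike.ofReal ∘ μ : m → ℝ) = μ by funext i; simp] at this
  have hherm : ∀ f : m → ℝ, (U * Matrix.diagonal f * star U).IsHermitian := by
    intro f
    have : (U * Matrix.diagonal f * star U)ᴴ = U * Matrix.diagonal f * star U := by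
      rw [Matrix.conjTranspose_mul, Matrix.conjTranspose_mul, Matrix.diagonal_conjTranspose]
      simp [Matrix.star_eq_conjTranspose, mul_assoc]
    exact this
  refine ⟨U * Matrix.diagonal (fun i => (μ i)⁻¹) * star U, hherm _, ?_, ?_, ?_⟩
  · have h2 : (fun i => μ i * (μ i)⁻¹) = fun i => (μ i)⁻¹ * μ i := by
      funext i; ring
    rw [hPs, key, key, h2]
  · have h2 : (fun i => μ i * (μ i)⁻¹ * μ i) = μ := by
      funext i
      rcases eq_or_ne (μ i) 0 with h | h
      · simp [h]
      · field_simp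
    rw [hPs, key, key, h2]
  · have h2 : (fun i => (μ i)⁻¹ * μ i * (μ i)⁻¹) = fun i => (μ i)⁻¹ := by
      funext i
      rcases eq_or_ne (μ i) 0 with h | h
      · simp [h]
      · field_simp
    rw [hPs, key, key, h2]

end AuxLemmas

/-- if `[[λI − Γ, λΣ̃^{1/2}], [λΣ̃^{1/2}, Z]] ⪰ 0` then for every PSD `Σ`,
`Tr(ΓΣ) + 2λ·Tr[(Σ^{1/2} Σ̃ Σ^{1/2})^{1/2}] ≤ λ·Tr(Σ) + Tr(Z)`. -/
theorem trace_bound_of_block_posSemidef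
    (n : ℕ) (hn : 1 ≤ n) (lam : ℝ) (hlam : 0 ≤ lam)
    (Γ : Matrix (Fin n) (Fin n) ℝ) (hΓ : Γ.IsSymm)
    (Z SigT : Matrix (Fin n) (Fin n) ℝ) (hZ : Z.PosSemidef) (hSigT : SigT.PosSemidef)
    (hblk : (Matrix.fromBlocks (lam • (1 : Matrix (Fin n) (Fin n) ℝ) - Γ)
        (lam • psdSqrt SigT) (lam • psdSqrt SigT) Z).PosSemidef) :
    ∀ S : Matrix (Fin n) (Fin n) ℝ, S.PosSemidef →
      (Γ * S).trace + 2 * lam * (psdSqrt (psdSqrt S * SigT * psdSqrt S)).trace ≤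
        lam * S.trace + Z.trace := by
  intro S hS
  set T := psdSqrt S with hT_def
  set W := psdSqrt SigT with hW_def
  have hTpsd : T.PosSemidef := (aux_psdSqrt_spec hS).1
  have hWpsd : W.PosSemidef := (aux_psdSqrt_spec hSigT).1
  have hTT : T * T = S := (aux_psdSqrt_spec hS).2
  have hWW : W * W = SigT := (aux_psdSqrt_spec hSigT).2
  have hTh : Tᴴ = T := hTpsd.1
  have hWh : Wᴴ = W := hWpsd.1
  have hQpsd : (T * SigT * T).PosSemidef := by
    have h : T * SigT * T = (T * W) * (T * W)ᴴ := by
      rw [Matrix.conjTranspose_mul, hTh, hWh, ← hWW]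
      simp only [mul_assoc]
    rw [h]
    exact Matrix.posSemidef_self_mul_conjTranspose _
  set P := psdSqrt (T * SigT * T) with hP_def
  have hPpsd : P.PosSemidef := (aux_psdSqrt_spec hQpsd).1
  have hPP : P * P = T * SigT * T := (aux_psdSqrt_spec hQpsd).2
  have hPh : Pᴴ = P := hPpsd.1
  obtain ⟨B, hBh, hBcomm, hPBP, hBPB⟩ := aux_exists_pinv hPpsd.1
  have hBh' : Bᴴ = B := hBh
  -- basic consequences of the pseudoinverse identities
  have hPPB : P * P * B = P := by
    rw [mul_assoc, hBcomm, ← mul_assoc, hPBP]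
  have hBPP : B * (P * P) = P := by
    rw [← mul_assoc, ← hBcomm, hPBP]
  have hBBPP : B * B * (P * P) = B * P := by
    calc B * B * (P * P) = B * ((B * P) * P) := by simp only [mul_assoc]
      _ = B * (P * B * P) := by rw [← hBcomm]
      _ = B * P := by rw [hPBP]
  -- right-associated rewriting lemmas
  have hMN' : ∀ X : Matrix (Fin n) (Fin n) ℝ,
      T * (W * (W * (T * X))) = P * (P * X) := by
    intro X
    calc T * (W * (W * (T * X))) = (T * SigT * T) * X := by
          rw [← hWW]; simp only [mul_assoc]
      _ = (P * P) * X := by rw [hPP]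
      _ = P * (P * X) := by simp only [mul_assoc]
  have h4 : ∀ X : Matrix (Fin n) (Fin n) ℝ,
      B * (B * (P * (P * X))) = B * (P * X) := by
    intro X
    calc B * (B * (P * (P * X))) = (B * B * (P * P)) * X := by simp only [mul_assoc]
      _ = (B * P) * X := by rw [hBBPP]
      _ = B * (P * X) := by simp only [mul_assoc]
  have h5 : ∀ X : Matrix (Fin n) (Fin n) ℝ,
      B * (P * (B * X)) = B * X := by
    intro X
    calc B * (P * (B * X)) = (B * P * B) * X := by simp only [mul_assoc]
      _ = B * X := by rw [hBPB]
  -- the test matrix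
  set V : Matrix (Fin n) (Fin n) ℝ := -(W * T * B) with hV_def
  have hVh : Vᴴ = -(B * T * W) := by
    rw [hV_def, Matrix.conjTranspose_neg, Matrix.conjTranspose_mul, Matrix.conjTranspose_mul,
      hBh', hTh, hWh]
    simp only [mul_assoc]
  set K : Matrix (Fin n ⊕ Fin n) (Fin n ⊕ Fin n) ℝ := Matrix.fromBlocks T 0 V 0 with hK_def
  set Blk := Matrix.fromBlocks (lam • (1 : Matrix (Fin n) (Fin n) ℝ) - Γ)
      (lam • W) (lam • W) Z with hBlk_def
  have hKpsd : (Kᴴ * Blk * K).PosSemidef := hblk.conjTranspose_mul_mul_same K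
  have h0 : 0 ≤ (Kᴴ * Blk * K).trace := aux_trace_nonneg hKpsd
  have htrace : (Kᴴ * Blk * K).trace =
      (Tᴴ * (lam • (1 : Matrix (Fin n) (Fin n) ℝ) - Γ) * T).trace
      + (Tᴴ * (lam • W) * V).trace + (Vᴴ * (lam • W) * T).trace + (Vᴴ * Z * V).trace := by
    rw [hK_def, hBlk_def, Matrix.fromBlocks_conjTranspose, Matrix.fromBlocks_multiply,
      Matrix.fromBlocks_multiply, aux_trace_fromBlocks]
    simp only [Matrix.conjTranspose_zero, Matrix.zero_mul, Matrix.mul_zero, add_zero,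
      zero_add, Matrix.add_mul, Matrix.trace_add, Matrix.trace_zero]
    ring
  -- term 1
  have ht1 : (Tᴴ * (lam • (1 : Matrix (Fin n) (Fin n) ℝ) - Γ) * T).trace
      = lam * S.trace - (Γ * S).trace := by
    rw [hTh]
    have h : T * (lam • (1 : Matrix (Fin n) (Fin n) ℝ) - Γ) * T
        = lam • (T * T) - T * Γ * T := by
      simp only [Matrix.mul_sub, Matrix.sub_mul, Matrix.mul_smul, Matrix.smul_mul,
        Matrix.mul_one, Matrix.one_mul, mul_assoc]
    rw [h, Matrix.trace_sub, Matrix.trace_smul, hTT, trace_mul_cycle, hTT, trace_mul_comm,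
      smul_eq_mul]
  -- term 2
  have ht2 : (Tᴴ * (lam • W) * V).trace = -(lam * P.trace) := by
    rw [hTh, hV_def]
    have h : T * (lam • W) * -(W * T * B) = -(lam • (P * (P * B))) := by
      rw [← hMN' B]
      simp only [Matrix.mul_smul, Matrix.smul_mul, mul_neg, smul_neg, mul_assoc]
    rw [h, ← mul_assoc, hPPB, Matrix.trace_neg, Matrix.trace_smul, smul_eq_mul]
  -- term 3
  have ht3 : (Vᴴ * (lam • W) * T).trace = -(lam * P.trace) := by
    rw [hVh]
    have h : -(B * T * W) * (lam • W) * T = -(lam • (B * (P * (P * 1)))) := by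
      rw [← hMN' 1]
      simp only [Matrix.mul_smul, Matrix.smul_mul, neg_mul, smul_neg, Matrix.mul_one, mul_assoc]
    rw [h, Matrix.mul_one, hBPP, Matrix.trace_neg, Matrix.trace_smul, smul_eq_mul]
  -- term 4
  have ht4 : (Vᴴ * Z * V).trace ≤ Z.trace := by
    obtain ⟨F, hF_def⟩ : ∃ F : Matrix (Fin n) (Fin n) ℝ,
        F = W * (T * (B * (B * (T * W)))) := ⟨_, rfl⟩
    have hFh : Fᴴ = F := by
      rw [hF_def]
      simp only [Matrix.conjTranspose_mul, hBh', hTh, hWh, mul_assoc]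
    have hFF : F * F = F := by
      rw [hF_def]
      calc (W * (T * (B * (B * (T * W))))) * (W * (T * (B * (B * (T * W)))))
          = W * (T * (B * (B * (T * (W * (W * (T * (B * (B * (T * W)))))))))) := by
            simp only [mul_assoc]
        _ = W * (T * (B * (B * (P * (P * (B * (B * (T * W)))))))) := by rw [hMN']
        _ = W * (T * (B * (P * (B * (B * (T * W)))))) := by rw [h4]
        _ = W * (T * (B * (B * (T * W)))) := by rw [h5]
    have htr4 : (Vᴴ * Z * V).trace = (Z * F).trace := by
      rw [hVh, hV_def, hF_def]
      have h : -(B * T * W) * Z * -(W * T * B) = (B * (T * W)) * (Z * (W * (T * B))) := by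
        simp only [neg_mul, mul_neg, neg_neg, mul_assoc]
      rw [h, trace_mul_comm]
      congr 1
      simp only [mul_assoc]
    have hGG : (1 - F) * (1 - F) = 1 - F := by
      simp only [Matrix.mul_sub, Matrix.sub_mul, hFF, Matrix.mul_one, Matrix.one_mul]
      abel
    have hGh : (1 - F)ᴴ = 1 - F := by
      rw [Matrix.conjTranspose_sub, hFh, Matrix.conjTranspose_one]
    have hG : (Z * (1 - F)).trace = ((1 - F)ᴴ * Z * (1 - F)).trace := by
      rw [hGh]
      conv_lhs => rw [← hGG]
      rw [← mul_assoc, trace_mul_cycle]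
    have hG0 : 0 ≤ (Z * (1 - F)).trace := by
      rw [hG]
      exact aux_trace_nonneg (hZ.conjTranspose_mul_mul_same _)
    have hsub : (Z * (1 - F)).trace = Z.trace - (Z * F).trace := by
      rw [Matrix.mul_sub, Matrix.trace_sub, Matrix.mul_one]
    rw [htr4]
    linarith
  rw [htrace, ht1, ht2, ht3] at h0
  linarith
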